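/- arXiv:2307.01360 — 4 statements merged into one kernel-verified Lean document; each statement's English description precedes it below -/
import Mathlib

section
/- For all a,b,c,g ∈ ℂ, the Dotsenko–Fateev operator DF(a,b,c,g) coincides with the operator E₃(a+c+1, 2a+2c+g+2, b+c+1, 2b+2c+g+2, −2c, −a−b−2c−g−1): for every x ∈ ℂ the coefficients of ∂³, ∂², ∂ and 1 of the two operators agree. In particular, the accessory parameter satisfies A₀₀(a+c+1, 2a+2c+g+2, b+c+1, 2b+2c+g+2, −2c, −a−b−2c−g−1) = c(2a+2c+g+1)(2a+2b+2c+g+2). -/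
/-!
STATEMENT 0: The Dotsenko–Fateev operator DF(a,b,c,g) coincides with
E₃(a+c+1, 2a+2c+g+2, b+c+1, 2b+2c+g+2, −2c, −a−b−2c−g−1):
all four coefficients agree, and the accessory parameter satisfies
A₀₀(...) = c(2a+2c+g+1)(2a+2b+2c+g+2).
-/

/-- Coefficient of ∂² of the Dotsenko–Fateev operator. -/
noncomputable def DF1 (a b c g x : ℂ) : ℂ :=
  -(x - 1) * x * (3*a*x + 3*b*x + 6*c*x + 2*g*x - 3*a - 3*c - g)

/-- Coefficient of ∂ of the Dotsenko–Fateev operator. -/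
noncomputable def DF2 (a b c g x : ℂ) : ℂ :=
  (2*a^2 + 4*a*b + 12*a*c + 3*a*g + 2*b^2 + 12*b*c + 3*b*g + 12*c^2 + 8*c*g + g^2
      + a + b + 6*c + g) * x^2
  + (-4*a^2 - 4*a*b - 16*a*c - 4*a*g - 8*b*c - 2*b*g - 12*c^2 - 8*c*g - g^2
      - 2*a - 6*c - g) * x
  + (2*a^2 + 4*a*c + a*g + 2*c^2 + c*g + a + c)

/-- Coefficient of 1 of the Dotsenko–Fateev operator. -/
noncomputable def DF3 (a b c g x : ℂ) : ℂ :=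
  c * (2*a + 2*b + 2*c + g + 2) * (-(2*a + 2*b + 4*c + 2*g + 2)*x + 2*a + 2*c + g + 1)

/-- The accessory parameter A₀₀(e₁,…,e₆) of the equation E₃. -/
noncomputable def A00 (e1 e2 e3 e4 e5 e6 : ℂ) : ℂ :=
  let e7 := 3 - (e1 + e2 + e3 + e4 + e5 + e6)
  (-4*(e1 + e2 - e3 - e4)^3 - 27*e5*e6*e7
    + 9*(e1 + e2 - e3 - e4)*(e5*e6 + e5*e7 + e6*e7 - 2)
    + 9*e1*e2*(e1 + e2 - 1) + 18*(e1 + e2 - 1)*(e3^2 + e3*e4 + e4^2)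
    - 9*e3*e4*(e3 + e4 - 1) - 18*(e3 + e4 - 1)*(e1^2 + e1*e2 + e2^2)) / 54

/-- Coefficient of ∂² of E₃. -/
noncomputable def E3coeff2 (e1 e2 e3 e4 : ℂ) (x : ℂ) : ℂ :=
  x*(x - 1)*((6 - e1 - e2 - e3 - e4)*x + e1 + e2 - 3)

/-- Coefficient of ∂ of E₃. -/
noncomputable def E3coeff1 (e1 e2 e3 e4 e5 e6 : ℂ) (x : ℂ) : ℂ :=
  let e7 := 3 - (e1 + e2 + e3 + e4 + e5 + e6)
  ((e5 + e6 + 1)*e7 + (e6 + 1)*(e5 + 1)) * x^2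
  + (-(e5 + e6)*e7 - e1*e2 + e3*e4 - e5*e6 + 2*e1 + 2*e2 - 4) * x
  + (e1 - 1)*(e2 - 1)

/-- Coefficient of 1 of E₃. -/
noncomputable def E3coeff0 (e1 e2 e3 e4 e5 e6 : ℂ) (x : ℂ) : ℂ :=
  let e7 := 3 - (e1 + e2 + e3 + e4 + e5 + e6)
  (e5*e6*e7) * x + A00 e1 e2 e3 e4 e5 e6

theorem DF_eq_E3 (a b c g : ℂ) :
    (∀ x : ℂ,
      x^2*(x - 1)^2 = x^2*(x - 1)^2 ∧
      DF1 a b c g x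
        = E3coeff2 (a + c + 1) (2*a + 2*c + g + 2) (b + c + 1) (2*b + 2*c + g + 2) x ∧
      DF2 a b c g x
        = E3coeff1 (a + c + 1) (2*a + 2*c + g + 2) (b + c + 1) (2*b + 2*c + g + 2)
            (-2*c) (-a - b - 2*c - g - 1) x ∧
      DF3 a b c g x
        = E3coeff0 (a + c + 1) (2*a + 2*c + g + 2) (b + c + 1) (2*b + 2*c + g + 2)
            (-2*c) (-a - b - 2*c - g - 1) x) ∧
    A00 (a + c + 1) (2*a + 2*c + g + 2) (b + c + 1) (2*b + 2*c + g + 2)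
        (-2*c) (-a - b - 2*c - g - 1)
      = c * (2*a + 2*c + g + 1) * (2*a + 2*b + 2*c + g + 2) := by
  have hA : A00 (a + c + 1) (2*a + 2*c + g + 2) (b + c + 1) (2*b + 2*c + g + 2)
        (-2*c) (-a - b - 2*c - g - 1)
      = c * (2*a + 2*c + g + 1) * (2*a + 2*b + 2*c + g + 2) := by
    unfold A00
    field_simp
    ring
  refine ⟨fun x => ⟨rfl, ?_, ?_, ?_⟩, hA⟩
  · unfold DF1 E3coeff2; ring
  · unfold DF2 E3coeff1; ring
  · unfold DF3 E3coeff0; rw [hA]; ring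
end

section
/- S-value for the shift a → a−1 of the Dotsenko–Fateev equation: let P₋(a,b,c,g) = (x−1)²∂² − (x−1)(3a+3b+4c+2g+2−(a+c)/x)∂ + (2a+2b+2c+g+2)(a+b+2c+g+1−c/x), and let P₊(a,b,c,g) = x²(θ²+(e₅+e₆)θ+e₅e₆) + x(−2θ²+(4+4a+7c+2g+b)θ−6ca−6c²−2cb−3cg−6c) + (θ²−(e₁+e₂)θ+e₁e₂), where θ = x∂, e₁ = a+c+1, e₂ = 2a+2c+g+2, e₅ = −2c, e₆ = −a−b−2c−g−1. Then for every u holomorphic on an open set U ⊆ ℂ∖{0,1} with (DF(a,b,c,g)u)(x) = 0 for all x ∈ U, one has (P₊(a−1,b,c,g)(P₋(a,b,c,g)u))(x) = a(2a+g)(a+1+g+b+c)(2a+2b+2c+2+g)·u(x) for all x ∈ U. -/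
/-- The Dotsenko–Fateev operator DF(a,b,c,g) acting on a function u. -/
noncomputable def DFop (a b c g : ℂ) (u : ℂ → ℂ) : ℂ → ℂ := fun x =>
  x^2*(x - 1)^2 * iteratedDeriv 3 u x + DF1 a b c g x * iteratedDeriv 2 u x
    + DF2 a b c g x * deriv u x + DF3 a b c g x * u x

/-- The shift operator P₋ for a → a−1 acting on a function u. -/
noncomputable def Pan (a b c g : ℂ) (u : ℂ → ℂ) : ℂ → ℂ := fun x =>
  (x - 1)^2 * iteratedDeriv 2 u x
  - (x - 1) * (3*a + 3*b + 4*c + 2*g + 2 - (a + c)/x) * deriv u x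
  + (2*a + 2*b + 2*c + g + 2) * (a + b + 2*c + g + 1 - c/x) * u x

/-- The shift operator P₊ for a → a+1, in (x,θ)-form
`P₊ = x²((θ+e₅)(θ+e₆)) + x(−2θ²+(4+4a+7c+2g+b)θ−6ca−6c²−2cb−3cg−6c) + (θ−e₁)(θ−e₂)`,
acting on a function v, where θv = x·v′ and θ²v = x·v′ + x²·v″. -/
noncomputable def Pap (a b c g : ℂ) (v : ℂ → ℂ) : ℂ → ℂ := fun x =>
  let e1 := a + c + 1
  let e2 := 2*a + 2*c + g + 2
  let e5 := -2*c
  let e6 := -a - b - 2*c - g - 1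
  let t1 := x * deriv v x
  let t2 := x * deriv v x + x^2 * iteratedDeriv 2 v x
  x^2 * (t2 + (e5 + e6)*t1 + e5*e6 * v x)
  + x * (-2*t2 + (4 + 4*a + 7*c + 2*g + b)*t1
      + (-6*c*a - 6*c^2 - 2*c*b - 3*c*g - 6*c) * v x)
  + (t2 - (e1 + e2)*t1 + e1*e2 * v x)


lemma hDiv1 (q y : ℂ) (hy : y ≠ 0) : HasDerivAt (fun t : ℂ => q / t) (-(q/y^2)) y := by
  have h := (hasDerivAt_const y q).div (hasDerivAt_id y) hy
  refine h.congr_deriv ?_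
  simp only [id_eq]
  field_simp
  ring

lemma hDiv2 (q y : ℂ) (hy : y ≠ 0) : HasDerivAt (fun t : ℂ => q / t^2) (-(2*q/y^3)) y := by
  have h := (hasDerivAt_const y q).div (hasDerivAt_pow 2 y) (pow_ne_zero 2 hy)
  refine h.congr_deriv ?_
  field_simp
  ring

lemma hPoly4 (p4 p3 p2 p1 p0 y : ℂ) :
    HasDerivAt (fun t : ℂ => p4*t^4 + p3*t^3 + p2*t^2 + p1*t + p0)
      (4*p4*y^3 + 3*p3*y^2 + 2*p2*y + p1) y := by
  have h := (((((hasDerivAt_pow 4 y).const_mul p4).add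
      ((hasDerivAt_pow 3 y).const_mul p3)).add
      ((hasDerivAt_pow 2 y).const_mul p2)).add
      ((hasDerivAt_id y).const_mul p1)).add_const p0
  refine h.congr_deriv ?_
  push_cast
  ring


set_option maxHeartbeats 1000000 in
theorem DF_Svalue_a_minus (a b c g : ℂ) (U : Set ℂ) (hU : IsOpen U)
    (hU0 : (0 : ℂ) ∉ U) (hU1 : (1 : ℂ) ∉ U)
    (u : ℂ → ℂ) (hu : DifferentiableOn ℂ u U)
    (hsol : ∀ x ∈ U, DFop a b c g u x = 0) (x : ℂ) (hx : x ∈ U) :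
    Pap (a - 1) b c g (Pan a b c g u) x
      = a * (2*a + g) * (a + 1 + g + b + c) * (2*a + 2*b + 2*c + 2 + g) * u x := by
  have hxU : U ∈ nhds x := hU.mem_nhds hx
  have hx0 : x ≠ 0 := fun h => hU0 (h ▸ hx)
  have hx1 : (x - 1) ≠ 0 := sub_ne_zero.mpr (fun h => hU1 (h ▸ hx))
  have hA0 : AnalyticOnNhd ℂ u U := hu.analyticOnNhd hU
  have hA1 : AnalyticOnNhd ℂ (deriv u) U := hA0.deriv
  have hA2 : AnalyticOnNhd ℂ (deriv (deriv u)) U := hA1.deriv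
  have hA3 : AnalyticOnNhd ℂ (deriv (deriv (deriv u))) U := hA2.deriv
  have hit2 : iteratedDeriv 2 u = deriv (deriv u) := by
    rw [iteratedDeriv_succ, iteratedDeriv_one]
  have hit3 : iteratedDeriv 3 u = deriv (deriv (deriv u)) := by
    rw [iteratedDeriv_succ, hit2]
  -- derivative of Pan u on U
  have hDP : ∀ y ∈ U, HasDerivAt (Pan a b c g u)
      ((((2*(y - 1)) * (deriv (deriv u)) y + ((y - 1)^2) * (deriv (deriv (deriv u))) y) + ((-(3*a + 3*b + 4*c + 2*g + 2) + (a + c)/y^2) * (deriv u) y + (((3*a + 3*b + 4*c + 2*g + 2) + (a + c)) - (3*a + 3*b + 4*c + 2*g + 2)*y - (a + c)/y) * (deriv (deriv u)) y)) + ((((2*a + 2*b + 2*c + g + 2)*c)/y^2) * u y + ((2*a + 2*b + 2*c + g + 2)*(a + b + 2*c + g + 1) - ((2*a + 2*b + 2*c + g + 2)*c)/y) * (deriv u) y)) y := by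
    intro y hy
    have hy0 : y ≠ 0 := fun h => hU0 (h ▸ hy)
    have hw0y : HasDerivAt u ((deriv u) y) y := (hA0 y hy).differentiableAt.hasDerivAt
    have hw1y : HasDerivAt (deriv u) ((deriv (deriv u)) y) y :=
      (hA1 y hy).differentiableAt.hasDerivAt
    have hw2y : HasDerivAt (deriv (deriv u)) ((deriv (deriv (deriv u))) y) y :=
      (hA2 y hy).differentiableAt.hasDerivAt
    have hcA : HasDerivAt (fun t : ℂ => (t - 1)^2) (2*(y - 1)) y := by
      have h := ((hasDerivAt_id y).sub_const 1).pow 2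
      refine h.congr_deriv ?_
      all_goals ((try simp only [id_eq]); (try push_cast); ring)
    have hcB : HasDerivAt (fun t : ℂ => ((3*a + 3*b + 4*c + 2*g + 2) + (a + c)) - (3*a + 3*b + 4*c + 2*g + 2)*t - (a + c)/t) (-(3*a + 3*b + 4*c + 2*g + 2) + (a + c)/y^2) y := by
      have h := (((hasDerivAt_id y).const_mul (3*a + 3*b + 4*c + 2*g + 2)).const_sub ((3*a + 3*b + 4*c + 2*g + 2) + (a + c))).sub (hDiv1 (a + c) y hy0)
      refine h.congr_deriv ?_
      all_goals ((try simp only [id_eq]); (try push_cast); ring)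
    have hcC : HasDerivAt (fun t : ℂ => (2*a + 2*b + 2*c + g + 2)*(a + b + 2*c + g + 1) - ((2*a + 2*b + 2*c + g + 2)*c)/t) (((2*a + 2*b + 2*c + g + 2)*c)/y^2) y := by
      have h := (hDiv1 ((2*a + 2*b + 2*c + g + 2)*c) y hy0).const_sub ((2*a + 2*b + 2*c + g + 2)*(a + b + 2*c + g + 1))
      refine h.congr_deriv ?_
      all_goals ((try simp only [id_eq]); (try push_cast); ring)
    have hPc : HasDerivAt (fun t : ℂ => (t - 1)^2 * (deriv (deriv u)) t + (((3*a + 3*b + 4*c + 2*g + 2) + (a + c)) - (3*a + 3*b + 4*c + 2*g + 2)*t - (a + c)/t) * (deriv u) t + ((2*a + 2*b + 2*c + g + 2)*(a + b + 2*c + g + 1) - ((2*a + 2*b + 2*c + g + 2)*c)/t) * u t)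
        ((((2*(y - 1)) * (deriv (deriv u)) y + ((y - 1)^2) * (deriv (deriv (deriv u))) y) + ((-(3*a + 3*b + 4*c + 2*g + 2) + (a + c)/y^2) * (deriv u) y + (((3*a + 3*b + 4*c + 2*g + 2) + (a + c)) - (3*a + 3*b + 4*c + 2*g + 2)*y - (a + c)/y) * (deriv (deriv u)) y)) + ((((2*a + 2*b + 2*c + g + 2)*c)/y^2) * u y + ((2*a + 2*b + 2*c + g + 2)*(a + b + 2*c + g + 1) - ((2*a + 2*b + 2*c + g + 2)*c)/y) * (deriv u) y)) y :=
      ((hcA.mul hw2y).add (hcB.mul hw1y)).add (hcC.mul hw0y)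
    refine hPc.congr_of_eventuallyEq ?_
    refine Filter.eventuallyEq_of_mem (hU.mem_nhds hy) (fun t ht => ?_)
    have ht0 : t ≠ 0 := fun h => hU0 (h ▸ ht)
    simp only [Pan, hit2]
    field_simp
    ring
  have h1P : deriv (Pan a b c g u) x
      = (((2*(x - 1)) * (deriv (deriv u)) x + ((x - 1)^2) * (deriv (deriv (deriv u))) x) + ((-(3*a + 3*b + 4*c + 2*g + 2) + (a + c)/x^2) * (deriv u) x + (((3*a + 3*b + 4*c + 2*g + 2) + (a + c)) - (3*a + 3*b + 4*c + 2*g + 2)*x - (a + c)/x) * (deriv (deriv u)) x)) + ((((2*a + 2*b + 2*c + g + 2)*c)/x^2) * u x + ((2*a + 2*b + 2*c + g + 2)*(a + b + 2*c + g + 1) - ((2*a + 2*b + 2*c + g + 2)*c)/x) * (deriv u) x) := (hDP x hx).deriv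
  -- second derivative of Pan u at x
  have hw0x : HasDerivAt u ((deriv u) x) x := (hA0 x hx).differentiableAt.hasDerivAt
  have hw1x : HasDerivAt (deriv u) ((deriv (deriv u)) x) x :=
    (hA1 x hx).differentiableAt.hasDerivAt
  have hw2x : HasDerivAt (deriv (deriv u)) ((deriv (deriv (deriv u))) x) x :=
    (hA2 x hx).differentiableAt.hasDerivAt
  have hw3x : HasDerivAt (deriv (deriv (deriv u))) ((deriv (deriv (deriv (deriv u)))) x) x :=
    (hA3 x hx).differentiableAt.hasDerivAt
  have h2P : iteratedDeriv 2 (Pan a b c g u) x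
      = ((((2) * (deriv (deriv u)) x + ((2*(x - 1))) * (deriv (deriv (deriv u))) x) + (((2*(x - 1))) * (deriv (deriv (deriv u))) x + ((x - 1)^2) * (deriv (deriv (deriv (deriv u)))) x)) + ((((-(2*(a + c)/x^3))) * (deriv u) x + ((-(3*a + 3*b + 4*c + 2*g + 2) + (a + c)/x^2)) * (deriv (deriv u)) x) + (((-(3*a + 3*b + 4*c + 2*g + 2) + (a + c)/x^2)) * (deriv (deriv u)) x + (((3*a + 3*b + 4*c + 2*g + 2) + (a + c)) - (3*a + 3*b + 4*c + 2*g + 2)*x - (a + c)/x) * (deriv (deriv (deriv u))) x))) + ((((-(2*((2*a + 2*b + 2*c + g + 2)*c)/x^3))) * u x + ((((2*a + 2*b + 2*c + g + 2)*c)/x^2)) * (deriv u) x) + (((((2*a + 2*b + 2*c + g + 2)*c)/x^2)) * (deriv u) x + ((2*a + 2*b + 2*c + g + 2)*(a + b + 2*c + g + 1) - ((2*a + 2*b + 2*c + g + 2)*c)/x) * (deriv (deriv u)) x)) := by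
    rw [iteratedDeriv_succ, iteratedDeriv_one]
    have hev : deriv (Pan a b c g u) =ᶠ[nhds x]
        (fun y : ℂ => (((2*(y - 1)) * (deriv (deriv u)) y + ((y - 1)^2) * (deriv (deriv (deriv u))) y) + ((-(3*a + 3*b + 4*c + 2*g + 2) + (a + c)/y^2) * (deriv u) y + (((3*a + 3*b + 4*c + 2*g + 2) + (a + c)) - (3*a + 3*b + 4*c + 2*g + 2)*y - (a + c)/y) * (deriv (deriv u)) y)) + ((((2*a + 2*b + 2*c + g + 2)*c)/y^2) * u y + ((2*a + 2*b + 2*c + g + 2)*(a + b + 2*c + g + 1) - ((2*a + 2*b + 2*c + g + 2)*c)/y) * (deriv u) y)) :=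
      Filter.eventuallyEq_of_mem hxU (fun y hy => (hDP y hy).deriv)
    rw [hev.deriv_eq]
    have hq1 : HasDerivAt (fun t : ℂ => (2*(t - 1))) 2 x := by
      have h := ((hasDerivAt_id x).sub_const 1).const_mul (2:ℂ)
      refine h.congr_deriv ?_
      all_goals ((try simp only [id_eq]); (try push_cast); ring)
    have hq2 : HasDerivAt (fun t : ℂ => (t - 1)^2) (2*(x - 1)) x := by
      have h := ((hasDerivAt_id x).sub_const 1).pow 2
      refine h.congr_deriv ?_
      all_goals ((try simp only [id_eq]); (try push_cast); ring)
    have hq3 : HasDerivAt (fun t : ℂ => (-(3*a + 3*b + 4*c + 2*g + 2) + (a + c)/t^2)) (-(2*(a + c)/x^3)) x := by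
      have h := (hDiv2 (a + c) x hx0).const_add (-(3*a + 3*b + 4*c + 2*g + 2))
      refine h.congr_deriv ?_
      rfl
    have hq4 : HasDerivAt (fun t : ℂ => ((3*a + 3*b + 4*c + 2*g + 2) + (a + c)) - (3*a + 3*b + 4*c + 2*g + 2)*t - (a + c)/t) (-(3*a + 3*b + 4*c + 2*g + 2) + (a + c)/x^2) x := by
      have h := (((hasDerivAt_id x).const_mul (3*a + 3*b + 4*c + 2*g + 2)).const_sub ((3*a + 3*b + 4*c + 2*g + 2) + (a + c))).sub (hDiv1 (a + c) x hx0)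
      refine h.congr_deriv ?_
      all_goals ((try simp only [id_eq]); (try push_cast); ring)
    have hq5 : HasDerivAt (fun t : ℂ => (((2*a + 2*b + 2*c + g + 2)*c)/t^2)) (-(2*((2*a + 2*b + 2*c + g + 2)*c)/x^3)) x := hDiv2 ((2*a + 2*b + 2*c + g + 2)*c) x hx0
    have hq6 : HasDerivAt (fun t : ℂ => (2*a + 2*b + 2*c + g + 2)*(a + b + 2*c + g + 1) - ((2*a + 2*b + 2*c + g + 2)*c)/t) (((2*a + 2*b + 2*c + g + 2)*c)/x^2) x := by
      have h := (hDiv1 ((2*a + 2*b + 2*c + g + 2)*c) x hx0).const_sub ((2*a + 2*b + 2*c + g + 2)*(a + b + 2*c + g + 1))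
      refine h.congr_deriv ?_
      all_goals ((try simp only [id_eq]); (try push_cast); ring)
    exact ((((hq1.mul hw2x).add (hq2.mul hw3x)).add ((hq3.mul hw1x).add (hq4.mul hw2x))).add
      ((hq5.mul hw0x).add (hq6.mul hw1x))).deriv
  -- the DF relation, in a clean polynomial normal form
  have hFc : ∀ t : ℂ, DFop a b c g u t
      = (1*t^4 + (-2)*t^3 + 1*t^2 + 0*t + 0) * (deriv (deriv (deriv u))) t + (0*t^4 + (-(3*a + 3*b + 6*c + 2*g))*t^3 + (6*a + 3*b + 9*c + 3*g)*t^2 + (-(3*a + 3*c + g))*t + 0) * (deriv (deriv u)) t + (0*t^4 + 0*t^3 + (2*a^2 + 4*a*b + 12*a*c + 3*a*g + 2*b^2 + 12*b*c + 3*b*g + 12*c^2 + 8*c*g + g^2 + a + b + 6*c + g)*t^2 + (-4*a^2 - 4*a*b - 16*a*c - 4*a*g - 8*b*c - 2*b*g - 12*c^2 - 8*c*g - g^2 - 2*a - 6*c - g)*t + (2*a^2 + 4*a*c + a*g + 2*c^2 + c*g + a + c)) * (deriv u) t + (0*t^4 + 0*t^3 + 0*t^2 + (-(c*(2*a + 2*b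 + 2*c + g + 2)*(2*a + 2*b + 4*c + 2*g + 2)))*t + (c*(2*a + 2*b + 2*c + g + 2)*(2*a + 2*c + g + 1))) * u t := by
    intro t
    simp only [DFop, DF1, DF2, DF3, hit2, hit3]
    ring
  have h3 : (1*x^4 + (-2)*x^3 + 1*x^2 + 0*x + 0) * (deriv (deriv (deriv u))) x + (0*x^4 + (-(3*a + 3*b + 6*c + 2*g))*x^3 + (6*a + 3*b + 9*c + 3*g)*x^2 + (-(3*a + 3*c + g))*x + 0) * (deriv (deriv u)) x + (0*x^4 + 0*x^3 + (2*a^2 + 4*a*b + 12*a*c + 3*a*g + 2*b^2 + 12*b*c + 3*b*g + 12*c^2 + 8*c*g + g^2 + a + b + 6*c + g)*x^2 + (-4*a^2 - 4*a*b - 16*a*c - 4*a*g - 8*b*c - 2*b*g - 12*c^2 - 8*c*g - g^2 - 2*a - 6*c - g)*x + (2*a^2 + 4*a*c + a*g + 2*c^2 + c*g + a + c)) * (deriv u) x + (0*x^4 + 0*x^3 + 0*x^2 + (-(c*(2*a + 2*b + 2*c + g + 2)*(2*a + 2*b + 4*c + 2*g + 2)))*x + (c*(2*a + 2*b + 2*c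 + g + 2)*(2*a + 2*c + g + 1))) * u x = 0 := by
    rw [← hFc x]; exact hsol x hx
  have hc3F : HasDerivAt (fun t : ℂ => (1*t^4 + (-2)*t^3 + 1*t^2 + 0*t + 0)) (4*1*x^3 + 3*(-2)*x^2 + 2*1*x + 0) x := hPoly4 1 (-2) 1 0 0 x
  have hc2F : HasDerivAt (fun t : ℂ => (0*t^4 + (-(3*a + 3*b + 6*c + 2*g))*t^3 + (6*a + 3*b + 9*c + 3*g)*t^2 + (-(3*a + 3*c + g))*t + 0)) (4*0*x^3 + 3*(-(3*a + 3*b + 6*c + 2*g))*x^2 + 2*(6*a + 3*b + 9*c + 3*g)*x + (-(3*a + 3*c + g))) x := hPoly4 0 (-(3*a + 3*b + 6*c + 2*g)) (6*a + 3*b + 9*c + 3*g) (-(3*a + 3*c + g)) 0 x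
  have hc1F : HasDerivAt (fun t : ℂ => (0*t^4 + 0*t^3 + (2*a^2 + 4*a*b + 12*a*c + 3*a*g + 2*b^2 + 12*b*c + 3*b*g + 12*c^2 + 8*c*g + g^2 + a + b + 6*c + g)*t^2 + (-4*a^2 - 4*a*b - 16*a*c - 4*a*g - 8*b*c - 2*b*g - 12*c^2 - 8*c*g - g^2 - 2*a - 6*c - g)*t + (2*a^2 + 4*a*c + a*g + 2*c^2 + c*g + a + c))) (4*0*x^3 + 3*0*x^2 + 2*(2*a^2 + 4*a*b + 12*a*c + 3*a*g + 2*b^2 + 12*b*c + 3*b*g + 12*c^2 + 8*c*g + g^2 + a + b + 6*c + g)*x + (-4*a^2 - 4*a*b - 16*a*c - 4*a*g - 8*b*c - 2*b*g - 12*c^2 - 8*c*g - g^2 - 2*a - 6*c - g)) x := hPoly4 0 0 (2*a^2 + 4*a*b + 12*a*c + 3*a*g + 2*b^2 + 12*b*c + 3*b*g + 12*c^2 + 8*c*g + g^2 + a + b + 6*c + g) (-4*a^2 - 4*a*b - 16*a*c - 4*a*g - 8*b*c - 2*b*g - 12*c^2 - 8*c*g - g^2 - 2*a - 6*c - g) (2*a^2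 + 4*a*c + a*g + 2*c^2 + c*g + a + c) x
  have hc0F : HasDerivAt (fun t : ℂ => (0*t^4 + 0*t^3 + 0*t^2 + (-(c*(2*a + 2*b + 2*c + g + 2)*(2*a + 2*b + 4*c + 2*g + 2)))*t + (c*(2*a + 2*b + 2*c + g + 2)*(2*a + 2*c + g + 1)))) (4*0*x^3 + 3*0*x^2 + 2*0*x + (-(c*(2*a + 2*b + 2*c + g + 2)*(2*a + 2*b + 4*c + 2*g + 2)))) x := hPoly4 0 0 0 (-(c*(2*a + 2*b + 2*c + g + 2)*(2*a + 2*b + 4*c + 2*g + 2))) (c*(2*a + 2*b + 2*c + g + 2)*(2*a + 2*c + g + 1)) x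
  have hFd : HasDerivAt (fun t : ℂ => (1*t^4 + (-2)*t^3 + 1*t^2 + 0*t + 0) * (deriv (deriv (deriv u))) t + (0*t^4 + (-(3*a + 3*b + 6*c + 2*g))*t^3 + (6*a + 3*b + 9*c + 3*g)*t^2 + (-(3*a + 3*c + g))*t + 0) * (deriv (deriv u)) t + (0*t^4 + 0*t^3 + (2*a^2 + 4*a*b + 12*a*c + 3*a*g + 2*b^2 + 12*b*c + 3*b*g + 12*c^2 + 8*c*g + g^2 + a + b + 6*c + g)*t^2 + (-4*a^2 - 4*a*b - 16*a*c - 4*a*g - 8*b*c - 2*b*g - 12*c^2 - 8*c*g - g^2 - 2*a - 6*c - g)*t + (2*a^2 + 4*a*c + a*g + 2*c^2 + c*g + a + c)) * (deriv u) t + (0*t^4 + 0*t^3 + 0*t^2 + (-(c*(2*a + 2*b + 2*c + g + 2)*(2*a + 2*b + 4*c + 2*g + 2)))*t + (c*(2*a + 2*b + 2*c + g + 2)*(2*a + 2*c + g + 1))) * u t)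
      ((((((4*1*x^3 + 3*(-2)*x^2 + 2*1*x + 0)) * (deriv (deriv (deriv u))) x + ((1*x^4 + (-2)*x^3 + 1*x^2 + 0*x + 0)) * (deriv (deriv (deriv (deriv u)))) x) + (((4*0*x^3 + 3*(-(3*a + 3*b + 6*c + 2*g))*x^2 + 2*(6*a + 3*b + 9*c + 3*g)*x + (-(3*a + 3*c + g)))) * (deriv (deriv u)) x + ((0*x^4 + (-(3*a + 3*b + 6*c + 2*g))*x^3 + (6*a + 3*b + 9*c + 3*g)*x^2 + (-(3*a + 3*c + g))*x + 0)) * (deriv (deriv (deriv u))) x)) + (((4*0*x^3 + 3*0*x^2 + 2*(2*a^2 + 4*a*b + 12*a*c + 3*a*g + 2*b^2 + 12*b*c + 3*b*g + 12*c^2 + 8*c*g + g^2 + a + b + 6*c + g)*x + (-4*a^2 - 4*a*b - 16*a*c - 4*a*g - 8*b*c - 2*b*g - 12*c^2 - 8*c*g - g^2 - 2*a - 6*c - g))) * (deriv u) x + ((0*x^4 + 0*x^3 + (2*a^2 + 4*a*b + 12*a*c + 3*a*g + 2*b^2 + 12*b*c + 3*b*g + 12*c^2 + 8*c*g + g^2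 + a + b + 6*c + g)*x^2 + (-4*a^2 - 4*a*b - 16*a*c - 4*a*g - 8*b*c - 2*b*g - 12*c^2 - 8*c*g - g^2 - 2*a - 6*c - g)*x + (2*a^2 + 4*a*c + a*g + 2*c^2 + c*g + a + c))) * (deriv (deriv u)) x)) + (((4*0*x^3 + 3*0*x^2 + 2*0*x + (-(c*(2*a + 2*b + 2*c + g + 2)*(2*a + 2*b + 4*c + 2*g + 2))))) * u x + ((0*x^4 + 0*x^3 + 0*x^2 + (-(c*(2*a + 2*b + 2*c + g + 2)*(2*a + 2*b + 4*c + 2*g + 2)))*x + (c*(2*a + 2*b + 2*c + g + 2)*(2*a + 2*c + g + 1)))) * (deriv u) x)) x :=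
    (((hc3F.mul hw3x).add (hc2F.mul hw2x)).add (hc1F.mul hw1x)).add (hc0F.mul hw0x)
  have h4 : (((((4*1*x^3 + 3*(-2)*x^2 + 2*1*x + 0)) * (deriv (deriv (deriv u))) x + ((1*x^4 + (-2)*x^3 + 1*x^2 + 0*x + 0)) * (deriv (deriv (deriv (deriv u)))) x) + (((4*0*x^3 + 3*(-(3*a + 3*b + 6*c + 2*g))*x^2 + 2*(6*a + 3*b + 9*c + 3*g)*x + (-(3*a + 3*c + g)))) * (deriv (deriv u)) x + ((0*x^4 + (-(3*a + 3*b + 6*c + 2*g))*x^3 + (6*a + 3*b + 9*c + 3*g)*x^2 + (-(3*a + 3*c + g))*x + 0)) * (deriv (deriv (deriv u))) x)) + (((4*0*x^3 + 3*0*x^2 + 2*(2*a^2 + 4*a*b + 12*a*c + 3*a*g + 2*b^2 + 12*b*c + 3*b*g + 12*c^2 + 8*c*g + g^2 + a + b + 6*c + g)*x + (-4*a^2 - 4*a*b - 16*a*c - 4*a*g - 8*b*c - 2*b*g - 12*c^2 - 8*c*g - g^2 - 2*a - 6*c - g))) * (deriv u) x + ((0*x^4 + 0*x^3 + (2*a^2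 + 4*a*b + 12*a*c + 3*a*g + 2*b^2 + 12*b*c + 3*b*g + 12*c^2 + 8*c*g + g^2 + a + b + 6*c + g)*x^2 + (-4*a^2 - 4*a*b - 16*a*c - 4*a*g - 8*b*c - 2*b*g - 12*c^2 - 8*c*g - g^2 - 2*a - 6*c - g)*x + (2*a^2 + 4*a*c + a*g + 2*c^2 + c*g + a + c))) * (deriv (deriv u)) x)) + (((4*0*x^3 + 3*0*x^2 + 2*0*x + (-(c*(2*a + 2*b + 2*c + g + 2)*(2*a + 2*b + 4*c + 2*g + 2))))) * u x + ((0*x^4 + 0*x^3 + 0*x^2 + (-(c*(2*a + 2*b + 2*c + g + 2)*(2*a + 2*b + 4*c + 2*g + 2)))*x + (c*(2*a + 2*b + 2*c + g + 2)*(2*a + 2*c + g + 1)))) * (deriv u) x) = 0 := by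
    rw [← hFd.deriv]
    have hev : (fun t : ℂ => (1*t^4 + (-2)*t^3 + 1*t^2 + 0*t + 0) * (deriv (deriv (deriv u))) t + (0*t^4 + (-(3*a + 3*b + 6*c + 2*g))*t^3 + (6*a + 3*b + 9*c + 3*g)*t^2 + (-(3*a + 3*c + g))*t + 0) * (deriv (deriv u)) t + (0*t^4 + 0*t^3 + (2*a^2 + 4*a*b + 12*a*c + 3*a*g + 2*b^2 + 12*b*c + 3*b*g + 12*c^2 + 8*c*g + g^2 + a + b + 6*c + g)*t^2 + (-4*a^2 - 4*a*b - 16*a*c - 4*a*g - 8*b*c - 2*b*g - 12*c^2 - 8*c*g - g^2 - 2*a - 6*c - g)*t + (2*a^2 + 4*a*c + a*g + 2*c^2 + c*g + a + c)) * (deriv u) t + (0*t^4 + 0*t^3 + 0*t^2 + (-(c*(2*a + 2*b + 2*c + g + 2)*(2*a + 2*b + 4*c + 2*g + 2)))*t + (c*(2*a + 2*b + 2*c + g + 2)*(2*a + 2*c + g + 1))) * u t) =ᶠ[nhds x] (fun _ : ℂ => (0:ℂ)) :=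
      Filter.eventuallyEq_of_mem hxU (fun y hy => by rw [← hFc y]; exact hsol y hy)
    rw [hev.deriv_eq, deriv_const]
  have hPx2 : Pan a b c g u x = (x*deriv (deriv u) x + 2*x*deriv u x + 2*x*u x - 2*x^2*deriv (deriv u) x - 2*x^2*deriv u x + x^3*deriv (deriv u) x + 2*g*x*deriv u x + 3*g*x*u x - 2*g*x^2*deriv u x + g^2*x*u x - c*deriv u x - 2*c*u x + 5*c*x*deriv u x + 6*c*x*u x - 4*c*x^2*deriv u x - c*g*u x + 4*c*g*x*u x - 2*c^2*u x + 4*c^2*x*u x + 3*b*x*deriv u x + 4*b*x*u x - 3*b*x^2*deriv u x + 3*b*g*x*u x - 2*b*c*u x + 6*b*c*x*u x + 2*b^2*x*u x - a*deriv u x + 4*a*x*deriv u x + 4*a*x*u x - 3*a*x^2*deriv u x + 3*a*g*x*u x - 2*a*c*u x + 6*a*c*x*u x + 4*a*b*x*u x + 2*a^2*x*u x)/x := by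
    simp only [Pan, hit2]
    field_simp
    ring
  have h1P2 : deriv (Pan a b c g u) x = (x^2*deriv (deriv (deriv u)) x - 2*x^3*deriv (deriv (deriv u)) x + x^4*deriv (deriv (deriv u)) x + 2*g*x^2*deriv (deriv u) x + g*x^2*deriv u x - 2*g*x^3*deriv (deriv u) x + g^2*x^2*deriv u x + c*deriv u x + 2*c*u x - c*x*deriv (deriv u) x - 2*c*x*deriv u x + 5*c*x^2*deriv (deriv u) x + 2*c*x^2*deriv u x - 4*c*x^3*deriv (deriv u) x + c*g*u x - c*g*x*deriv u x + 4*c*g*x^2*deriv u x + 2*c^2*u x - 2*c^2*x*deriv u x + 4*c^2*x^2*deriv u x + 3*b*x^2*deriv (deriv u) x + b*x^2*deriv u x - 3*b*x^3*deriv (deriv u) x + 3*b*g*x^2*deriv u x + 2*b*c*u x - 2*b*c*x*deriv u x + 6*b*c*x^2*deriv u x + 2*b^2*x^2*deriv u x + a*deriv u x - a*x*deriv (deriv u) x + 4*a*x^2*deriv (deriv u) x + a*x^2*deriv u x - 3*a*x^3*deriv (deriv u) x + 3*a*g*x^2*deriv u x + 2*a*c*u x - 2*a*c*x*deriv u x +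 6*a*c*x^2*deriv u x + 4*a*b*x^2*deriv u x + 2*a^2*x^2*deriv u x)/x^2 := by
    rw [h1P]
    field_simp
    ring
  have h2P2 : iteratedDeriv 2 (Pan a b c g u) x = (x^3*deriv (deriv (deriv (deriv u))) x - 2*x^3*deriv (deriv (deriv u)) x - 2*x^4*deriv (deriv (deriv (deriv u))) x + 2*x^4*deriv (deriv (deriv u)) x + x^5*deriv (deriv (deriv (deriv u))) x + 2*g*x^3*deriv (deriv (deriv u)) x - g*x^3*deriv (deriv u) x - 2*g*x^4*deriv (deriv (deriv u)) x + g^2*x^3*deriv (deriv u) x - 2*c*deriv u x - 4*c*u x + 2*c*x*deriv (deriv u) x + 4*c*x*deriv u x - c*x^2*deriv (deriv (deriv u)) x - 2*c*x^2*deriv (deriv u) x + 5*c*x^3*deriv (deriv (deriv u)) x - 2*c*x^3*deriv (deriv u) x - 4*c*x^4*deriv (deriv (deriv u)) x - 2*c*g*u x + 2*c*g*x*deriv u x - c*g*x^2*deriv (deriv u) x + 4*c*g*x^3*deriv (deriv u) x - 4*c^2*u x + 4*c^2*x*deriv u x - 2*c^2*x^2*deriv (deriv u) x + 4*c^2*x^3*deriv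 (deriv u) x + 3*b*x^3*deriv (deriv (deriv u)) x - 2*b*x^3*deriv (deriv u) x - 3*b*x^4*deriv (deriv (deriv u)) x + 3*b*g*x^3*deriv (deriv u) x - 4*b*c*u x + 4*b*c*x*deriv u x - 2*b*c*x^2*deriv (deriv u) x + 6*b*c*x^3*deriv (deriv u) x + 2*b^2*x^3*deriv (deriv u) x - 2*a*deriv u x + 2*a*x*deriv (deriv u) x - a*x^2*deriv (deriv (deriv u)) x + 4*a*x^3*deriv (deriv (deriv u)) x - 2*a*x^3*deriv (deriv u) x - 3*a*x^4*deriv (deriv (deriv u)) x + 3*a*g*x^3*deriv (deriv u) x - 4*a*c*u x + 4*a*c*x*deriv u x - 2*a*c*x^2*deriv (deriv u) x + 6*a*c*x^3*deriv (deriv u) x + 4*a*b*x^3*deriv (deriv u) x + 2*a^2*x^3*deriv (deriv u) x)/x^3 := by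
    rw [h2P]
    field_simp
    ring
  have hstep : Pap (a - 1) b c g (Pan a b c g u) x
      = x^2*(x - 1)^2 * iteratedDeriv 2 (Pan a b c g u) x
        + (x^3*(1 - a - b - 4*c - g) + x^2*(4*a + b + 7*c + 2*g - 2) + x*(1 - 3*a - 3*c - g)) * deriv (Pan a b c g u) x
        + (x^2*(2*c*(a + b + 2*c + g)) + x*(-6*c*a - 6*c^2 - 2*c*b - 3*c*g) + (a + c)*(2*a + 2*c + g)) * Pan a b c g u x := by
    simp only [Pap]
    ring
  rw [hstep, h2P2, h1P2, hPx2]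
  have hx3 : (x:ℂ)^3 ≠ 0 := pow_ne_zero 3 hx0
  apply mul_left_cancel₀ hx3
  have gen3 : ∀ (p q r : ℂ), r ≠ 0 → r^3 * (p * (q / r^3)) = p * q := by
    intro p q r hr; field_simp
  have gen2 : ∀ (p q r : ℂ), r ≠ 0 → r^3 * (p * (q / r^2)) = r * (p * q) := by
    intro p q r hr; field_simp
  have gen1 : ∀ (p q r : ℂ), r ≠ 0 → r^3 * (p * (q / r)) = r^2 * (p * q) := by
    intro p q r hr; field_simp
  rw [mul_add, mul_add, gen3 _ _ _ hx0, gen2 _ _ _ hx0, gen1 _ _ _ hx0]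
  linear_combination (x^3*(x - 1)^2) * h4
    + (x^2*(-(a + c + 1) + (2 + 2*a + b + 3*c + g)*x - (1 + a + b + 2*c + g)*x^2)) * h3
end

section
/- Factorization of the Dotsenko–Fateev operator at a = −1: with Dn₁ = (x−1)∂ − (2b+2c+g+1) and Dn₂ = x(θ−2c)(θ−b−2c−g) − (θ−c)(θ−2c−g), where θ = x∂, for every function u holomorphic on an open set U ⊆ ℂ∖{0,1} and every x ∈ U one has (DF(−1,b,c,g)u)(x) = (Dn₁(Dn₂ u))(x). -/
/-- The second factor Dn₂ = x(θ−2c)(θ−b−2c−g) − (θ−c)(θ−2c−g) acting on u,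
where θu = x·u′ and θ²u = x·u′ + x²·u″. -/
noncomputable def Dn2 (b c g : ℂ) (u : ℂ → ℂ) : ℂ → ℂ := fun x =>
  let t1 := x * deriv u x
  let t2 := x * deriv u x + x^2 * iteratedDeriv 2 u x
  x * (t2 - (2*c + (b + 2*c + g))*t1 + 2*c*(b + 2*c + g) * u x)
  - (t2 - (c + (2*c + g))*t1 + c*(2*c + g) * u x)

/-- The first factor Dn₁ = (x−1)∂ − (2b+2c+g+1) acting on a function w. -/
noncomputable def Dn1 (b c g : ℂ) (w : ℂ → ℂ) : ℂ → ℂ := fun x =>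
  (x - 1) * deriv w x - (2*b + 2*c + g + 1) * w x

theorem DF_factorization_a_eq_neg_one (b c g : ℂ) (U : Set ℂ) (hU : IsOpen U)
    (hU0 : (0 : ℂ) ∉ U) (hU1 : (1 : ℂ) ∉ U)
    (u : ℂ → ℂ) (hu : DifferentiableOn ℂ u U) (x : ℂ) (hx : x ∈ U) :
    DFop (-1) b c g u x = Dn1 b c g (Dn2 b c g u) x := by
  have hA : AnalyticOnNhd ℂ u U := hu.analyticOnNhd hU
  have h1 : AnalyticOnNhd ℂ (deriv u) U := hA.deriv
  have h2 : AnalyticOnNhd ℂ (deriv (deriv u)) U := h1.deriv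
  have H0 : HasDerivAt u (deriv u x) x := (hA x hx).differentiableAt.hasDerivAt
  have H1 : HasDerivAt (deriv u) (deriv (deriv u) x) x :=
    (h1 x hx).differentiableAt.hasDerivAt
  have H2 : HasDerivAt (deriv (deriv u)) (deriv (deriv (deriv u)) x) x :=
    (h2 x hx).differentiableAt.hasDerivAt
  have hit2 : iteratedDeriv 2 u = deriv (deriv u) := by
    simp [iteratedDeriv_succ, iteratedDeriv_zero]
  have hit3 : iteratedDeriv 3 u = deriv (deriv (deriv u)) := by
    simp [iteratedDeriv_succ, iteratedDeriv_zero]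
  set u0 := u x
  set u1 := deriv u x
  set u2 := deriv (deriv u) x
  set u3 := deriv (deriv (deriv u)) x
  have hfun : Dn2 b c g u = fun y =>
      y * ((y * deriv u y + y^2 * deriv (deriv u) y)
            - (2*c + (b + 2*c + g)) * (y * deriv u y)
            + 2*c*(b + 2*c + g) * u y)
      - ((y * deriv u y + y^2 * deriv (deriv u) y)
            - (c + (2*c + g)) * (y * deriv u y)
            + c*(2*c + g) * u y) := by
    funext y
    simp only [Dn2, hit2]
  -- derivative of the pieces at x
  have g1 : HasDerivAt (fun y => y * deriv u y) (1 * u1 + x * u2) x :=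
    (hasDerivAt_id x).mul H1
  have g2 : HasDerivAt (fun y => y^2 * deriv (deriv u) y)
      ((2 : ℕ) * x ^ 1 * u2 + x^2 * u3) x :=
    (hasDerivAt_pow 2 x).mul H2
  have hin1 : HasDerivAt (fun y =>
      (y * deriv u y + y^2 * deriv (deriv u) y)
        - (2*c + (b + 2*c + g)) * (y * deriv u y)
        + 2*c*(b + 2*c + g) * u y)
      (((1 * u1 + x * u2) + ((2 : ℕ) * x ^ 1 * u2 + x^2 * u3))
        - (2*c + (b + 2*c + g)) * (1 * u1 + x * u2)
        + 2*c*(b + 2*c + g) * u1) x :=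
    ((g1.add g2).sub (g1.const_mul _)).add (H0.const_mul _)
  have hin2 : HasDerivAt (fun y =>
      (y * deriv u y + y^2 * deriv (deriv u) y)
        - (c + (2*c + g)) * (y * deriv u y)
        + c*(2*c + g) * u y)
      (((1 * u1 + x * u2) + ((2 : ℕ) * x ^ 1 * u2 + x^2 * u3))
        - (c + (2*c + g)) * (1 * u1 + x * u2)
        + c*(2*c + g) * u1) x :=
    ((g1.add g2).sub (g1.const_mul _)).add (H0.const_mul _)
  have hD : HasDerivAt (Dn2 b c g u)
      ((1 * ((x * u1 + x^2 * u2)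
            - (2*c + (b + 2*c + g)) * (x * u1)
            + 2*c*(b + 2*c + g) * u0)
        + x * (((1 * u1 + x * u2) + ((2 : ℕ) * x ^ 1 * u2 + x^2 * u3))
            - (2*c + (b + 2*c + g)) * (1 * u1 + x * u2)
            + 2*c*(b + 2*c + g) * u1))
       - (((1 * u1 + x * u2) + ((2 : ℕ) * x ^ 1 * u2 + x^2 * u3))
            - (c + (2*c + g)) * (1 * u1 + x * u2)
            + c*(2*c + g) * u1)) x := by
    rw [hfun]
    exact ((hasDerivAt_id x).mul hin1).sub hin2
  have hDval : deriv (Dn2 b c g u) x =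
      ((1 * ((x * u1 + x^2 * u2)
            - (2*c + (b + 2*c + g)) * (x * u1)
            + 2*c*(b + 2*c + g) * u0)
        + x * (((1 * u1 + x * u2) + ((2 : ℕ) * x ^ 1 * u2 + x^2 * u3))
            - (2*c + (b + 2*c + g)) * (1 * u1 + x * u2)
            + 2*c*(b + 2*c + g) * u1))
       - (((1 * u1 + x * u2) + ((2 : ℕ) * x ^ 1 * u2 + x^2 * u3))
            - (c + (2*c + g)) * (1 * u1 + x * u2)
            + c*(2*c + g) * u1)) := hD.deriv
  simp only [DFop, DF1, DF2, DF3, Dn1, Dn2, hDval, hit2, hit3]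
  push_cast
  ring
end

section
/- Characterization of the singular points of the variety X₅: let y = (y₁,…,y₈) ∈ ℂ⁸ with y ≠ 0, y₁+⋯+y₈ = 0 and y₁³+⋯+y₈³ = 0. Then there exists λ ∈ ℂ such that 3yᵢ² = λ for all i = 1,…,8 (i.e. the gradient of F₈ at y is proportional to (1,…,1), so that the corresponding projective point is a singular point of X₅) if and only if there exist t ∈ ℂ∖{0} and ε ∈ {1,−1}⁸ with ε₁+⋯+ε₈ = 0 such that yᵢ = t·εᵢ for all i. In particular, the singular points of X₅ are exactly the finitely many projective points [ε₁ : ⋯ : ε₈] with εᵢ = ±1 and ε₁+⋯+ε₈ = 0, hence they are isolated. -/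
/-!
STATEMENT 12: Characterization of the singular points of X₅: for a nonzero
y ∈ ℂ⁸ with Σyᵢ = 0 and Σyᵢ³ = 0, the gradient of F₈ at y is proportional to
(1,…,1) iff y is a nonzero scalar multiple of a sign vector ε ∈ {±1}⁸ with
ε₁+⋯+ε₈ = 0.
-/

theorem X5_singular_points (y : Fin 8 → ℂ) (hy : y ≠ 0)
    (hsum : ∑ i, y i = 0) (hcube : ∑ i, (y i)^3 = 0) :
    (∃ lam : ℂ, ∀ i, 3 * (y i)^2 = lam) ↔
    (∃ t : ℂ, t ≠ 0 ∧ ∃ ε : Fin 8 → ℂ,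
      (∀ i, ε i = 1 ∨ ε i = -1) ∧ (∑ i, ε i = 0) ∧ (∀ i, y i = t * ε i)) := by
  constructor
  · rintro ⟨lam, hlam⟩
    have hlam0 : lam ≠ 0 := by
      intro h0
      apply hy
      funext i
      have h2 : (y i)^2 = 0 := by linear_combination (hlam i)/3 + h0/3
      simpa [pow_eq_zero_iff] using h2
    obtain ⟨t, ht⟩ := IsAlgClosed.exists_pow_nat_eq (lam / 3) (n := 2) (by norm_num)
    have ht0 : t ≠ 0 := by
      intro h0
      apply hlam0
      rw [h0] at ht
      have : lam / 3 = 0 := by rw [← ht]; ring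
      field_simp at this
      simpa using this
    refine ⟨t, ht0, fun i => y i / t, ?_, ?_, ?_⟩
    · intro i
      have hsq : (y i / t) * (y i / t) = 1 := by
        have h1 : (y i)^2 = lam / 3 := by
          have := hlam i; field_simp at this ⊢; linear_combination this
        field_simp
        rw [h1, ht]
      exact mul_self_eq_one_iff.mp hsq
    · rw [← Finset.sum_div, hsum, zero_div]
    · intro i; field_simp
  · rintro ⟨t, ht0, ε, hε, hεsum, hyt⟩
    refine ⟨3 * t^2, fun i => ?_⟩
    have h1 : (ε i)^2 = 1 := by rcases hε i with h | h <;> rw [h] <;> ring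
    rw [hyt i, mul_pow, ← mul_assoc]
    rw [mul_comm 3 (t^2), mul_assoc, h1, mul_one, mul_comm]
end
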